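/- Let f : A →* B and g : C →* D be surjective group homomorphisms, and let p : A →* C and q : B →* D be group homomorphisms admitting sections s : C →* A and t : D →* B (p ∘ s = id, q ∘ t = id) such that g ∘ p = q ∘ f and f ∘ s = t ∘ g. Then the comparison homomorphism from A to the pullback {(b,c) ∈ B × C | q b = g c}, sending a to (f a, p a), is surjective. -/
import Mathlib


/-- A split epimorphism between extensions of groups is a double extension: given
surjective `f : A →* B` and `g : C →* D`, homomorphisms `p : A →* C`, `q : B →* D`
with sections `s`, `t` making the square and its section-square commute, the
comparison map `a ↦ (f a, p a)` from `A` to the pullback `{(b,c) | q b = g c}`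
is surjective. -/
theorem split_epi_between_extensions_is_double_extension
    {A B C D : Type*} [Group A] [Group B] [Group C] [Group D]
    (f : A →* B) (g : C →* D) (p : A →* C) (q : B →* D) (s : C →* A) (t : D →* B)
    (hf : Function.Surjective f) (hg : Function.Surjective g)
    (hps : p.comp s = MonoidHom.id C) (hqt : q.comp t = MonoidHom.id D)
    (hsq : g.comp p = q.comp f) (hst : f.comp s = t.comp g) :
    Function.Surjective
      (fun a : A => (⟨(f a, p a), (DFunLike.congr_fun hsq a).symm⟩ :
        {x : B × C // q x.1 = g x.2})) := by
  rintro ⟨⟨b, c⟩, h⟩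
  obtain ⟨a', ha'⟩ := hf (b * (f (s c))⁻¹)
  refine ⟨a' * (s (p a'))⁻¹ * s c, ?_⟩
  have h1 : f (s (p a')) = 1 := by
    have := DFunLike.congr_fun hst (p a')
    have h2 := DFunLike.congr_fun hsq a'
    simp only [MonoidHom.comp_apply] at this h2
    rw [this, h2, ha']
    simp only [map_mul, map_inv]
    have h3 := DFunLike.congr_fun hqt (g c)
    have h4 := DFunLike.congr_fun hsq (s c)
    have h5 := DFunLike.congr_fun hps c
    simp only [MonoidHom.comp_apply, MonoidHom.id_apply] at h3 h4 h5
    have h' : q b = g c := h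
    rw [← h4, h5, ← h']
    group
  have h6 := DFunLike.congr_fun hps (p a')
  have h7 := DFunLike.congr_fun hps c
  simp only [MonoidHom.comp_apply, MonoidHom.id_apply] at h6 h7
  apply Subtype.ext
  apply Prod.ext <;> simp [ha', h1, h6, h7]
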